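/- The translation tr₃ from L_PAKC to L′_PAKC, defined by the clauses tr₃(Y=y) = []Y=y; tr₃(¬χ) = ¬tr₃(χ); tr₃(χ₁∧χ₂) = tr₃(χ₁)∧tr₃(χ₂); tr₃(Kχ) = K tr₃(χ); tr₃([α!]χ) = [tr₃(α)!]tr₃(χ); tr₃([X⃗:=x⃗]Y=y) = [X⃗:=x⃗]Y=y; tr₃([X⃗:=x⃗]¬χ) = tr₃(¬[X⃗:=x⃗]χ); tr₃([X⃗:=x⃗](χ₁∧χ₂)) = tr₃([X⃗:=x⃗]χ₁ ∧ [X⃗:=x⃗]χ₂); tr₃([X⃗:=x⃗]Kχ) = tr₃(K[X⃗:=x⃗]χ); tr₃([X⃗:=x⃗][α!]Y=y) = tr₃([X⃗:=x⃗](α → Y=y)); tr₃([X⃗:=x⃗][α!]¬χ) = tr₃([X⃗:=x⃗](α → ¬[α!]χ)); tr₃([X⃗:=x⃗][α!](χ₁∧χ₂)) = tr₃([X⃗:=x⃗]([α!]χ₁ ∧ [α!]χ₂)); tr₃([X⃗:=x⃗][α!]Kχ) = tr₃([X⃗:=x⃗](α → K(α → [α!]χ))); tr₃([X⃗:=x⃗][α₁!][α₂!]χ)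 = tr₃([X⃗:=x⃗][α₁ ∧ [α₁!]α₂ !]χ); tr₃([X⃗:=x⃗][α!][Y⃗:=y⃗]χ) = tr₃([[X⃗:=x⃗]α !][X⃗′:=x⃗′, Y⃗:=y⃗]χ); tr₃([X⃗:=x⃗][Y⃗:=y⃗]χ) = tr₃([X⃗′:=x⃗′, Y⃗:=y⃗]χ), with X⃗′ = X⃗ \ Y⃗, is well defined and satisfies, for every L_PAKC formula χ: (1) tr₃(χ) ∈ L′_PAKC; (2) χ ↔ tr₃(χ) is provable in the system L_PAKC; (3) χ ↔ tr₃(χ) is valid over epistemic recursive causal models. -/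

import Mathlib

open Classical

/-- A finite signature: variables sorted into exogenous and endogenous, each with a
finite nonempty range of values. -/
structure Sig : Type 1 where
  Var : Type
  exo : Var → Prop
  Val : Var → Type
  [decEqVar : DecidableEq Var]
  [finVar : Fintype Var]
  [neVar : Nonempty Var]
  [decEqVal : ∀ X : Var, DecidableEq (Val X)]
  [finVal : ∀ X : Var, Fintype (Val X)]
  [neVal : ∀ X : Var, Nonempty (Val X)]

attribute [instance] Sig.decEqVar Sig.finVar Sig.neVar Sig.decEqVal Sig.finVal Sig.neVal

variable {S : Sig}

/-- A valuation: a value for each variable. -/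
abbrev Env (S : Sig) : Type := ∀ X : S.Var, S.Val X

instance : Nonempty (Env S) := ⟨fun X => Classical.arbitrary (S.Val X)⟩

/-- Values for all variables other than `V`. -/
abbrev Others (S : Sig) (V : S.Var) : Type := ∀ X : {X : S.Var // X ≠ V}, S.Val X.val

/-- The restriction of a valuation to the variables other than `V`. -/
def Env.restrict (A : Env S) (V : S.Var) : Others S V := fun X => A X.val

/-- A family of structural functions (only the components at endogenous variables
are meaningful). -/
abbrev StructFuns (S : Sig) : Type := ∀ V : S.Var, Others S V → S.Val V

/-- A valuation complies with the structural functions: the value of each endogenous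
variable is obtained by applying its structural function to the values of all
other variables. -/
def Complies (F : StructFuns S) (A : Env S) : Prop :=
  ∀ V : S.Var, ¬ S.exo V → A V = F V (A.restrict V)

/-- The endogenous variable `V` is directly causally affected by `X` under `F`. -/
def DirAff (F : StructFuns S) (X V : S.Var) : Prop :=
  ¬ S.exo V ∧ ∃ (h : X ≠ V) (g : Others S V) (x₁ x₂ : S.Val X),
    x₁ ≠ x₂ ∧
      F V (Function.update g ⟨X, h⟩ x₁) ≠ F V (Function.update g ⟨X, h⟩ x₂)

/-- `F` is recursive: the transitive closure of the direct causal dependence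
relation is asymmetric (transitivity is automatic for `Relation.TransGen`). -/
def RecursiveF (F : StructFuns S) : Prop :=
  ∀ a b : S.Var, Relation.TransGen (DirAff F) a b → ¬ Relation.TransGen (DirAff F) b a

/-- An assignment of values to a set of pairwise distinct variables. -/
abbrev Intervention (S : Sig) : Type := ∀ X : S.Var, Option (S.Val X)

/-- The empty assignment. -/
def iEmpty (S : Sig) : Intervention S := fun _ => none

/-- Extend an assignment by additionally setting `Y` to `y` (overriding). -/
def iUpd (I : Intervention S) (Y : S.Var) (y : S.Val Y) : Intervention S :=
  Function.update I Y (some y)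

/-- Combine assignments, the second overriding the first:  `[X⃗ := x⃗, Y⃗ := y⃗]`. -/
def icomp (I J : Intervention S) : Intervention S := fun W =>
  match J W with
  | some v => some v
  | none => I W

/-- The intervened family of structural functions: intervened variables get the
constant function returning the assigned value; the rest are unchanged. -/
def intF (F : StructFuns S) (I : Intervention S) : StructFuns S :=
  fun V g => (I V).getD (F V g)

/-- `A'` is the result of intervening with `I` on the valuation `A` (w.r.t. `F`):
exogenous intervened variables get the assigned value, exogenous non-intervened
variables keep their value, and each endogenous variable complies with its new
structural function. -/
def IntervenedVal (F : StructFuns S) (A : Env S) (I : Intervention S) (A' : Env S) : Prop :=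
  (∀ X : S.Var, S.exo X → ∀ v : S.Val X, I X = some v → A' X = v) ∧
  (∀ X : S.Var, S.exo X → I X = none → A' X = A X) ∧
  (∀ V : S.Var, ¬ S.exo V → A' V = intF F I V (A'.restrict V))

/-- The intervened valuation (unique when `F` is recursive). -/
noncomputable def intVal (F : StructFuns S) (A : Env S) (I : Intervention S) : Env S :=
  Classical.epsilon (IntervenedVal F A I)

/-- The language L_PAKC: atoms `Y = y`, negation, conjunction, knowledge,
public announcements, and interventionist counterfactual operators. -/
inductive Form (S : Sig) : Type where
  | eq (Y : S.Var) (y : S.Val Y) : Form S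
  | neg (φ : Form S) : Form S
  | conj (φ ψ : Form S) : Form S
  | know (φ : Form S) : Form S
  | ann (α φ : Form S) : Form S
  | int (I : Intervention S) (φ : Form S) : Form S

namespace Form

/-- Material implication, defined from `¬` and `∧` as usual. -/
def impl (φ ψ : Form S) : Form S := Form.neg (Form.conj φ (Form.neg ψ))

/-- Disjunction, defined from `¬` and `∧` as usual. -/
def orF (φ ψ : Form S) : Form S := Form.neg (Form.conj (Form.neg φ) (Form.neg ψ))

/-- Biconditional. -/
def iffF (φ ψ : Form S) : Form S := Form.conj (impl φ ψ) (impl ψ φ)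

end Form

/-- A canonical contradiction. -/
noncomputable def botF (S : Sig) : Form S :=
  let X : S.Var := Classical.arbitrary S.Var
  let x : S.Val X := Classical.arbitrary (S.Val X)
  Form.conj (Form.eq X x) (Form.neg (Form.eq X x))

/-- A canonical tautology. -/
noncomputable def topF (S : Sig) : Form S := Form.neg (botF S)

/-- Disjunction of a list of formulas (the empty disjunction is a contradiction). -/
noncomputable def bigOr : List (Form S) → Form S
  | [] => botF S
  | φ :: l => l.foldl Form.orF φ

/-- Conjunction of a list of formulas (the empty conjunction is a tautology). -/
noncomputable def bigConj : List (Form S) → Form S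
  | [] => topF S
  | φ :: l => l.foldl Form.conj φ

/-- `φ` is an instance of a propositional tautology: it evaluates to `true` under
every Boolean valuation that respects negation and conjunction (treating all
other formulas as atoms). -/
def Tauto (φ : Form S) : Prop :=
  ∀ v : Form S → Bool,
    (∀ ψ : Form S, v (Form.neg ψ) = !(v ψ)) →
    (∀ ψ χ : Form S, v (Form.conj ψ χ) = (v ψ && v χ)) →
    v φ = true

/-- The assignment `[Z⃗ := z⃗, X := x]` where `Z⃗` lists all variables other than
`X` and `V`, used in the formula `X ⇝ V`. -/
def ltInt (X V : S.Var) (g : ∀ W : {W : S.Var // W ≠ X ∧ W ≠ V}, S.Val W.val)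
    (x : S.Val X) : Intervention S := fun W =>
  if h : W = X then some (h.symm ▸ x)
  else if h' : W = V then none
  else some (g ⟨W, ⟨h, h'⟩⟩)

/-- The formula `X ⇝ V`: the disjunction, over tuples `z⃗` of values for all
variables other than `X` and `V`, distinct values `x₁ ≠ x₂` of `X` and distinct
values `v₁ ≠ v₂` of `V`, of `[Z⃗:=z⃗, X:=x₁]V=v₁ ∧ [Z⃗:=z⃗, X:=x₂]V=v₂`. -/
noncomputable def leadsTo (X V : S.Var) : Form S :=
  bigOr ((Finset.univ.filter
      (fun p : (∀ W : {W : S.Var // W ≠ X ∧ W ≠ V}, S.Val W.val) ×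
          (S.Val X × S.Val X) × (S.Val V × S.Val V) =>
        p.2.1.1 ≠ p.2.1.2 ∧ p.2.2.1 ≠ p.2.2.2)).toList.map
    (fun p =>
      Form.conj
        (Form.int (ltInt X V p.1 p.2.1.1) (Form.eq V p.2.2.1))
        (Form.int (ltInt X V p.1 p.2.1.2) (Form.eq V p.2.2.2))))

/-- The chain `X₀ ⇝ X₁ ∧ ⋯ ∧ X_k ⇝ X_{k+1}`. -/
noncomputable def chainConj (X : ℕ → S.Var) : ℕ → Form S
  | 0 => leadsTo (X 0) (X 1)
  | n + 1 => Form.conj (chainConj X n) (leadsTo (X (n + 1)) (X (n + 2)))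

/-- `ψ₁ → (ψ₂ → ⋯ → (ψₙ → φ))` for a list of premises. -/
def impsFrom : List (Form S) → Form S → Form S
  | [], φ => φ
  | ψ :: l, φ => Form.impl ψ (impsFrom l φ)

/-- Satisfaction of an L_PAKC formula at a pointed epistemic causal model
`(⟨F, T⟩, A)` (the semantics `⊨ᵂ`, without observables). -/
def SatW : Form S → StructFuns S → Set (Env S) → Env S → Prop
  | Form.eq Y y, _, _, A => A Y = y
  | Form.neg φ, F, T, A => ¬ SatW φ F T A
  | Form.conj φ ψ, F, T, A => SatW φ F T A ∧ SatW ψ F T A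
  | Form.know φ, F, T, _ => ∀ B ∈ T, SatW φ F T B
  | Form.ann α φ, F, T, A =>
      SatW α F T A → SatW φ F {B | B ∈ T ∧ SatW α F T B} A
  | Form.int I φ, F, T, A =>
      SatW φ (intF F I) ((fun B => intVal F B I) '' T) (intVal F A I)

/-- The proof system L_PAKC: the system L_KC extended with necessitation for
interventions, the announcement reduction axioms and rules, and the commutation
axiom (=_!). -/
inductive ThmPAKC : Form S → Prop where
  | taut : ∀ {φ : Form S}, Tauto φ → ThmPAKC φ
  | mp : ∀ {φ ψ : Form S}, ThmPAKC (Form.impl φ ψ) → ThmPAKC φ → ThmPAKC ψ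
  | a1 : ∀ (I : Intervention S) (Y : S.Var) (y y' : S.Val Y), y ≠ y' →
      ThmPAKC (Form.impl (Form.int I (Form.eq Y y)) (Form.neg (Form.int I (Form.eq Y y'))))
  | a2 : ∀ (I : Intervention S) (Y : S.Var),
      ThmPAKC (bigOr (((Finset.univ : Finset (S.Val Y)).toList).map
        (fun y => Form.int I (Form.eq Y y))))
  | a3 : ∀ (I : Intervention S) (Y Z : S.Var) (y : S.Val Y) (z : S.Val Z),
      ThmPAKC (Form.impl (Form.conj (Form.int I (Form.eq Y y)) (Form.int I (Form.eq Z z)))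
        (Form.int (iUpd I Y y) (Form.eq Z z)))
  | a4 : ∀ (I : Intervention S) (Y : S.Var) (y : S.Val Y),
      ThmPAKC (Form.int (iUpd I Y y) (Form.eq Y y))
  | a5 : ∀ (I : Intervention S) (Y Z : S.Var) (y : S.Val Y) (z : S.Val Z), Y ≠ Z →
      ThmPAKC (Form.impl
        (Form.conj (Form.int (iUpd I Y y) (Form.eq Z z)) (Form.int (iUpd I Z z) (Form.eq Y y)))
        (Form.int I (Form.eq Z z)))
  | a6 : ∀ (X : ℕ → S.Var) (k : ℕ),
      (∀ i : ℕ, i ≤ k → X i ≠ X (i + 1)) → X (k + 1) ≠ X 0 →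
      ThmPAKC (Form.impl (chainConj X k) (Form.neg (leadsTo (X (k + 1)) (X 0))))
  | a7 : ∀ (I : Intervention S) (U : S.Var) (u : S.Val U), S.exo U → I U = none →
      ThmPAKC (Form.iffF (Form.int (iEmpty S) (Form.eq U u)) (Form.int I (Form.eq U u)))
  | aEmpty : ∀ (Y : S.Var) (y : S.Val Y),
      ThmPAKC (Form.iffF (Form.eq Y y) (Form.int (iEmpty S) (Form.eq Y y)))
  | aNeg : ∀ (I : Intervention S) (φ : Form S),
      ThmPAKC (Form.iffF (Form.int I (Form.neg φ)) (Form.neg (Form.int I φ)))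
  | aConj : ∀ (I : Intervention S) (φ ψ : Form S),
      ThmPAKC (Form.iffF (Form.int I (Form.conj φ ψ))
        (Form.conj (Form.int I φ) (Form.int I ψ)))
  | aIntInt : ∀ (I J : Intervention S) (φ : Form S),
      ThmPAKC (Form.iffF (Form.int I (Form.int J φ)) (Form.int (icomp I J) φ))
  | axK : ∀ (φ ψ : Form S),
      ThmPAKC (Form.impl (Form.know (Form.impl φ ψ))
        (Form.impl (Form.know φ) (Form.know ψ)))
  | necK : ∀ {φ : Form S}, ThmPAKC φ → ThmPAKC (Form.know φ)
  | axT : ∀ (φ : Form S), ThmPAKC (Form.impl (Form.know φ) φ)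
  | ax4 : ∀ (φ : Form S), ThmPAKC (Form.impl (Form.know φ) (Form.know (Form.know φ)))
  | ax5 : ∀ (φ : Form S),
      ThmPAKC (Form.impl (Form.neg (Form.know φ)) (Form.know (Form.neg (Form.know φ))))
  | cm : ∀ (I : Intervention S) (φ : Form S),
      ThmPAKC (Form.iffF (Form.int I (Form.know φ)) (Form.know (Form.int I φ)))
  | kl : ∀ (I : Intervention S) (Y : S.Var) (y : S.Val Y), ¬ S.exo Y →
      (∀ W : S.Var, (I W).isSome ↔ W ≠ Y) →
      ThmPAKC (Form.impl (Form.int I (Form.eq Y y))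
        (Form.know (Form.int I (Form.eq Y y))))
  | necInt : ∀ {φ : Form S} (I : Intervention S), ThmPAKC φ → ThmPAKC (Form.int I φ)
  | annEq : ∀ (α : Form S) (I : Intervention S) (Y : S.Var) (y : S.Val Y),
      ThmPAKC (Form.iffF (Form.ann α (Form.int I (Form.eq Y y)))
        (Form.impl α (Form.int I (Form.eq Y y))))
  | annNeg : ∀ (α φ : Form S),
      ThmPAKC (Form.iffF (Form.ann α (Form.neg φ))
        (Form.impl α (Form.neg (Form.ann α φ))))
  | annConj : ∀ (α φ ψ : Form S),
      ThmPAKC (Form.iffF (Form.ann α (Form.conj φ ψ))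
        (Form.conj (Form.ann α φ) (Form.ann α ψ)))
  | annKnow : ∀ (α φ : Form S),
      ThmPAKC (Form.iffF (Form.ann α (Form.know φ))
        (Form.impl α (Form.know (Form.impl α (Form.ann α φ)))))
  | annAnn : ∀ (α β φ : Form S),
      ThmPAKC (Form.iffF (Form.ann α (Form.ann β φ))
        (Form.ann (Form.conj α (Form.ann α β)) φ))
  | kAnn : ∀ (α φ ψ : Form S),
      ThmPAKC (Form.impl (Form.ann α (Form.impl φ ψ))
        (Form.impl (Form.ann α φ) (Form.ann α ψ)))
  | necAnn : ∀ {φ : Form S} (α : Form S), ThmPAKC φ → ThmPAKC (Form.ann α φ)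
  | reAnn : ∀ {α β : Form S} (φ : Form S), ThmPAKC (Form.iffF α β) →
      ThmPAKC (Form.iffF (Form.ann α φ) (Form.ann β φ))
  | intAnn : ∀ (I : Intervention S) (α φ : Form S),
      ThmPAKC (Form.iffF (Form.int I (Form.ann α φ))
        (Form.ann (Form.int I α) (Form.int I φ)))

/-- Strong derivability from a set of premises in L_PAKC. -/
def ProvPAKC (Γ : Set (Form S)) (φ : Form S) : Prop :=
  ∃ l : List (Form S), (∀ ψ ∈ l, ψ ∈ Γ) ∧ ThmPAKC (impsFrom l φ)

/-- The language L′_PAKC: formulas generated from `[X⃗:=x⃗]Y=y` by `¬`, `∧`, `K`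
and announcement operators. -/
inductive IsPAKC' : Form S → Prop where
  | intEq : ∀ (I : Intervention S) (Y : S.Var) (y : S.Val Y),
      IsPAKC' (Form.int I (Form.eq Y y))
  | neg : ∀ {φ : Form S}, IsPAKC' φ → IsPAKC' (Form.neg φ)
  | conj : ∀ {φ ψ : Form S}, IsPAKC' φ → IsPAKC' ψ → IsPAKC' (Form.conj φ ψ)
  | know : ∀ {φ : Form S}, IsPAKC' φ → IsPAKC' (Form.know φ)
  | ann : ∀ {α φ : Form S}, IsPAKC' α → IsPAKC' φ → IsPAKC' (Form.ann α φ)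

/-- The translation tr₃ from L_PAKC to L′_PAKC, given as a relation defined by
the recursive clauses of the definition (the theorem below asserts that it is
well defined, i.e. total and functional). -/
inductive Tr3 : Form S → Form S → Prop where
  | eq : ∀ (Y : S.Var) (y : S.Val Y),
      Tr3 (Form.eq Y y) (Form.int (iEmpty S) (Form.eq Y y))
  | neg : ∀ {φ φ' : Form S}, Tr3 φ φ' → Tr3 (Form.neg φ) (Form.neg φ')
  | conj : ∀ {φ φ' ψ ψ' : Form S}, Tr3 φ φ' → Tr3 ψ ψ' →
      Tr3 (Form.conj φ ψ) (Form.conj φ' ψ')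
  | know : ∀ {φ φ' : Form S}, Tr3 φ φ' → Tr3 (Form.know φ) (Form.know φ')
  | ann : ∀ {α α' φ φ' : Form S}, Tr3 α α' → Tr3 φ φ' →
      Tr3 (Form.ann α φ) (Form.ann α' φ')
  | intEq : ∀ (I : Intervention S) (Y : S.Var) (y : S.Val Y),
      Tr3 (Form.int I (Form.eq Y y)) (Form.int I (Form.eq Y y))
  | intNeg : ∀ {I : Intervention S} {φ χ : Form S},
      Tr3 (Form.neg (Form.int I φ)) χ → Tr3 (Form.int I (Form.neg φ)) χ
  | intConj : ∀ {I : Intervention S} {φ ψ χ : Form S},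
      Tr3 (Form.conj (Form.int I φ) (Form.int I ψ)) χ →
      Tr3 (Form.int I (Form.conj φ ψ)) χ
  | intKnow : ∀ {I : Intervention S} {φ χ : Form S},
      Tr3 (Form.know (Form.int I φ)) χ → Tr3 (Form.int I (Form.know φ)) χ
  | intAnnEq : ∀ {I : Intervention S} {α χ : Form S} (Y : S.Var) (y : S.Val Y),
      Tr3 (Form.int I (Form.impl α (Form.eq Y y))) χ →
      Tr3 (Form.int I (Form.ann α (Form.eq Y y))) χ
  | intAnnNeg : ∀ {I : Intervention S} {α φ χ : Form S},
      Tr3 (Form.int I (Form.impl α (Form.neg (Form.ann α φ)))) χ →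
      Tr3 (Form.int I (Form.ann α (Form.neg φ))) χ
  | intAnnConj : ∀ {I : Intervention S} {α φ ψ χ : Form S},
      Tr3 (Form.int I (Form.conj (Form.ann α φ) (Form.ann α ψ))) χ →
      Tr3 (Form.int I (Form.ann α (Form.conj φ ψ))) χ
  | intAnnKnow : ∀ {I : Intervention S} {α φ χ : Form S},
      Tr3 (Form.int I (Form.impl α (Form.know (Form.impl α (Form.ann α φ))))) χ →
      Tr3 (Form.int I (Form.ann α (Form.know φ))) χ
  | intAnnAnn : ∀ {I : Intervention S} {α β φ χ : Form S},
      Tr3 (Form.int I (Form.ann (Form.conj α (Form.ann α β)) φ)) χ →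
      Tr3 (Form.int I (Form.ann α (Form.ann β φ))) χ
  | intAnnInt : ∀ {I J : Intervention S} {α φ χ : Form S},
      Tr3 (Form.ann (Form.int I α) (Form.int (icomp I J) φ)) χ →
      Tr3 (Form.int I (Form.ann α (Form.int J φ))) χ
  | intInt : ∀ {I J : Intervention S} {φ χ : Form S},
      Tr3 (Form.int (icomp I J) φ) χ → Tr3 (Form.int I (Form.int J φ)) χ

/-! ### Auxiliary machinery -/

section Sens

variable {ι : Type} [DecidableEq ι] [Fintype ι] {β : ι → Type} {γ : Type}

/-- Sensitivity: if a function of finitely many coordinates takes different values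
on `g` and `g'`, there is a coordinate where `g` and `g'` differ and to which the
function is sensitive. -/
lemma sens_aux (f : (∀ i, β i) → γ) :
    ∀ (n : ℕ) (g g' : ∀ i, β i),
      (Finset.univ.filter fun i => g i ≠ g' i).card ≤ n → f g ≠ f g' →
      ∃ i, g i ≠ g' i ∧ ∃ (h : ∀ i, β i) (x₁ x₂ : β i), x₁ ≠ x₂ ∧
        f (Function.update h i x₁) ≠ f (Function.update h i x₂) := by
  intro n
  induction n with
  | zero =>
    intro g g' hcard hne
    exfalso
    apply hne
    have hg : g = g' := by
      funext i
      by_contra hi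
      have : i ∈ Finset.univ.filter fun i => g i ≠ g' i := by
        simp [hi]
      have := Finset.card_pos.mpr ⟨i, this⟩
      omega
    rw [hg]
  | succ n ih =>
    intro g g' hcard hne
    have hgg : g ≠ g' := by rintro rfl; exact hne rfl
    obtain ⟨i, hi⟩ : ∃ i, g i ≠ g' i := by
      by_contra h
      push_neg at h
      exact hgg (funext h)
    set g₂ := Function.update g i (g' i) with hg₂
    by_cases hcase : f g ≠ f g₂
    · refine ⟨i, hi, g, g i, g' i, hi, ?_⟩
      rwa [Function.update_eq_self]
    · push_neg at hcase
      have hne2 : f g₂ ≠ f g' := by rw [← hcase]; exact hne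
      have hsub : (Finset.univ.filter fun j => g₂ j ≠ g' j) ⊆
          (Finset.univ.filter fun j => g j ≠ g' j).erase i := by
        intro j hj
        simp only [Finset.mem_filter, Finset.mem_univ, true_and] at hj
        have hji : j ≠ i := by
          rintro rfl
          apply hj
          simp [hg₂]
        refine Finset.mem_erase.mpr ⟨hji, ?_⟩
        simp only [Finset.mem_filter, Finset.mem_univ, true_and]
        rwa [hg₂, Function.update_of_ne hji] at hj
      have hmem : i ∈ Finset.univ.filter fun j => g j ≠ g' j := by simp [hi]
      have hcard2 : (Finset.univ.filter fun j => g₂ j ≠ g' j).card ≤ n := by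
        have h1 := Finset.card_le_card hsub
        have h2 := Finset.card_erase_of_mem hmem
        have h3 := Finset.card_pos.mpr ⟨i, hmem⟩
        omega
      obtain ⟨j, hj, h, x₁, x₂, hx, hfx⟩ := ih g₂ g' hcard2 hne2
      refine ⟨j, ?_, h, x₁, x₂, hx, hfx⟩
      have hji : j ≠ i := by
        rintro rfl
        apply hj
        simp [hg₂]
      rwa [hg₂, Function.update_of_ne hji] at hj

lemma sens (f : (∀ i, β i) → γ) (g g' : ∀ i, β i) (hne : f g ≠ f g') :
    ∃ i, g i ≠ g' i ∧ ∃ (h : ∀ i, β i) (x₁ x₂ : β i), x₁ ≠ x₂ ∧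
      f (Function.update h i x₁) ≠ f (Function.update h i x₂) :=
  sens_aux f _ g g' le_rfl hne

end Sens

section Semantics

variable {S : Sig}

/-- A structural function only depends on the values of the variables that
directly causally affect its variable. -/
lemma structFun_eq_of_agree (F : StructFuns S) (V : S.Var) (hV : ¬ S.exo V)
    (g g' : Others S V)
    (h : ∀ (W : S.Var) (hW : W ≠ V), DirAff F W V → g ⟨W, hW⟩ = g' ⟨W, hW⟩) :
    F V g = F V g' := by
  by_contra hne
  obtain ⟨⟨W, hW⟩, hdiff, h0, x₁, x₂, hx, hfx⟩ := sens (F V) g g' hne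
  exact hdiff (h W hW ⟨hV, hW, h0, x₁, x₂, hx, hfx⟩)

lemma wf_of_recursive {F : StructFuns S} (hF : RecursiveF F) :
    WellFounded (Relation.TransGen (DirAff F)) := by
  haveI : IsTrans S.Var (Relation.TransGen (DirAff F)) :=
    ⟨fun _ _ _ => Relation.TransGen.trans⟩
  haveI : IsIrrefl S.Var (Relation.TransGen (DirAff F)) :=
    ⟨fun a h => hF a a h h⟩
  exact Finite.wellFounded_of_trans_of_irrefl _

/-- Uniqueness of the intervened valuation for recursive structural functions. -/
lemma intervenedVal_unique {F : StructFuns S} (hF : RecursiveF F)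
    {A : Env S} {I : Intervention S} {A' A'' : Env S}
    (h' : IntervenedVal F A I A') (h'' : IntervenedVal F A I A'') : A' = A'' := by
  funext V
  induction V using (wf_of_recursive hF).induction with
  | _ V ih =>
    by_cases hexo : S.exo V
    · cases hI : I V with
      | none => rw [h'.2.1 V hexo hI, h''.2.1 V hexo hI]
      | some v => rw [h'.1 V hexo v hI, h''.1 V hexo v hI]
    · rw [h'.2.2 V hexo, h''.2.2 V hexo]
      unfold intF
      cases hI : I V with
      | some v => rfl
      | none =>
        simp only [Option.getD_none]
        apply structFun_eq_of_agree F V hexo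
        intro W hW hdir
        exact ih W (Relation.TransGen.single hdir)

/-- Existence of the intervened valuation for recursive structural functions. -/
lemma intervenedVal_exists {F : StructFuns S} (hF : RecursiveF F)
    (A : Env S) (I : Intervention S) : ∃ A' : Env S, IntervenedVal F A I A' := by
  classical
  set r := Relation.TransGen (DirAff F) with hr
  have wf : WellFounded r := wf_of_recursive hF
  set body : ∀ V : S.Var, (∀ W : S.Var, r W V → S.Val W) → S.Val V :=
    fun V ih =>
      if S.exo V then (I V).getD (A V)
      else (I V).getD (F V (fun W =>
        if h : r W.val V then ih W.val h else Classical.arbitrary _)) with hbody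
  set A' : Env S := wf.fix body with hA'
  have hfix' : ∀ V, A' V = body V (fun W _ => A' W) := fun V =>
    WellFounded.fix_eq wf body V
  refine ⟨A', ?_, ?_, ?_⟩
  · intro X hX v hv
    rw [hfix' X, hbody]
    simp [hX, hv]
  · intro X hX hv
    rw [hfix' X, hbody]
    simp [hX, hv]
  · intro V hV
    rw [hfix' V, hbody]
    simp only [hV, if_false]
    unfold intF
    cases hI : I V with
    | some v => rfl
    | none =>
      simp only [Option.getD_none]
      apply structFun_eq_of_agree F V hV
      intro W hW hdir
      have : r W V := Relation.TransGen.single hdir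
      simp only [Env.restrict, this, dif_pos]

lemma intVal_spec {F : StructFuns S} (hF : RecursiveF F)
    (A : Env S) (I : Intervention S) : IntervenedVal F A I (intVal F A I) :=
  Classical.epsilon_spec (intervenedVal_exists hF A I)

lemma intVal_eq_of {F : StructFuns S} (hF : RecursiveF F)
    {A A' : Env S} {I : Intervention S} (h : IntervenedVal F A I A') :
    intVal F A I = A' :=
  intervenedVal_unique hF (intVal_spec hF A I) h

/-- The empty intervention does not change a complying valuation. -/
lemma intVal_empty {F : StructFuns S} (hF : RecursiveF F) {A : Env S}
    (hA : Complies F A) : intVal F A (iEmpty S) = A := by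
  apply intVal_eq_of hF
  refine ⟨?_, ?_, ?_⟩
  · intro X _ v hv; simp [iEmpty] at hv
  · intro X _ _; rfl
  · intro V hV
    exact hA V hV

lemma intF_comp (F : StructFuns S) (I J : Intervention S) :
    intF (intF F I) J = intF F (icomp I J) := by
  funext V g
  unfold intF icomp
  cases J V <;> rfl

lemma dirAff_intF {F : StructFuns S} {I : Intervention S} {X V : S.Var}
    (h : DirAff (intF F I) X V) : DirAff F X V := by
  obtain ⟨hV, hXV, g, x₁, x₂, hx, hfx⟩ := h
  refine ⟨hV, hXV, g, x₁, x₂, hx, ?_⟩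
  unfold intF at hfx
  cases hI : I V with
  | some v => rw [hI] at hfx; simp at hfx
  | none => rw [hI] at hfx; simpa using hfx

lemma recursive_intF {F : StructFuns S} (hF : RecursiveF F) (I : Intervention S) :
    RecursiveF (intF F I) := by
  intro a b hab hba
  exact hF a b (Relation.TransGen.mono (fun _ _ => dirAff_intF) a b hab)
    (Relation.TransGen.mono (fun _ _ => dirAff_intF) b a hba)

lemma complies_intVal {F : StructFuns S} (hF : RecursiveF F)
    (A : Env S) (I : Intervention S) : Complies (intF F I) (intVal F A I) :=
  fun V hV => (intVal_spec hF A I).2.2 V hV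

/-- Composition of interventions on valuations. -/
lemma intVal_comp {F : StructFuns S} (hF : RecursiveF F)
    (A : Env S) (I J : Intervention S) :
    intVal (intF F I) (intVal F A I) J = intVal F A (icomp I J) := by
  symm
  apply intVal_eq_of hF
  have h1 := intVal_spec hF A I
  have h2 := intVal_spec (recursive_intF hF I) (intVal F A I) J
  refine ⟨?_, ?_, ?_⟩
  · intro X hX v hv
    unfold icomp at hv
    cases hJ : J X with
    | some w =>
      rw [hJ] at hv
      exact h2.1 X hX v (by rw [hJ]; exact hv)
    | none =>
      rw [hJ] at hv
      rw [h2.2.1 X hX hJ]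
      exact h1.1 X hX v hv
  · intro X hX hv
    unfold icomp at hv
    cases hJ : J X with
    | some w => rw [hJ] at hv; exact absurd hv (by simp)
    | none =>
      rw [hJ] at hv
      rw [h2.2.1 X hX hJ, h1.2.1 X hX hv]
  · intro V hV
    rw [← intF_comp]
    exact h2.2.2 V hV

end Semantics

section Validity

variable {S : Sig}

lemma satW_impl {α ψ : Form S} {F : StructFuns S} {T : Set (Env S)} {A : Env S} :
    SatW (Form.impl α ψ) F T A ↔ (SatW α F T A → SatW ψ F T A) := by
  simp only [Form.impl, SatW]
  tauto

lemma satW_set_congr (φ : Form S) (F : StructFuns S) {T T' : Set (Env S)}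
    (h : T = T') (A : Env S) : SatW φ F T A ↔ SatW φ F T' A := by rw [h]

lemma satW_annEq (α : Form S) (ψ : Form S)
    (hψ : ∀ (F : StructFuns S) (T T' : Set (Env S)) (A : Env S),
      SatW ψ F T A ↔ SatW ψ F T' A)
    (F : StructFuns S) (T : Set (Env S)) (A : Env S) :
    SatW (Form.ann α ψ) F T A ↔ SatW (Form.impl α ψ) F T A := by
  rw [satW_impl]
  simp only [SatW]
  constructor
  · intro h hα; exact (hψ F _ T A).mp (h hα)
  · intro h hα; exact (hψ F T _ A).mp (h hα)

lemma satW_annNeg (α φ : Form S) (F : StructFuns S) (T : Set (Env S)) (A : Env S) :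
    SatW (Form.ann α (Form.neg φ)) F T A ↔
      SatW (Form.impl α (Form.neg (Form.ann α φ))) F T A := by
  rw [satW_impl]
  simp only [SatW]
  tauto

lemma satW_annConj (α φ ψ : Form S) (F : StructFuns S) (T : Set (Env S)) (A : Env S) :
    SatW (Form.ann α (Form.conj φ ψ)) F T A ↔
      SatW (Form.conj (Form.ann α φ) (Form.ann α ψ)) F T A := by
  simp only [SatW]
  tauto

lemma satW_annKnow (α φ : Form S) (F : StructFuns S) (T : Set (Env S)) (A : Env S) :
    SatW (Form.ann α (Form.know φ)) F T A ↔
      SatW (Form.impl α (Form.know (Form.impl α (Form.ann α φ)))) F T A := by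
  rw [satW_impl]
  simp only [SatW]
  constructor
  · intro h hα B hB
    rintro ⟨hαB, hno⟩
    exact hno fun _ => h hα B ⟨hB, hαB⟩
  · intro h hα B hB
    by_contra hc
    exact h hα B hB.1 ⟨hB.2, fun himp => hc (himp hB.2)⟩

lemma satW_annAnn (α β φ : Form S) (F : StructFuns S) (T : Set (Env S)) (A : Env S) :
    SatW (Form.ann α (Form.ann β φ)) F T A ↔
      SatW (Form.ann (Form.conj α (Form.ann α β)) φ) F T A := by
  simp only [SatW]
  constructor
  · intro h hc
    refine (satW_set_congr φ F ?_ A).mp (h hc.1 (hc.2 hc.1))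
    ext B; simp only [Set.mem_setOf_eq]; tauto
  · intro h h1 h2
    refine (satW_set_congr φ F ?_ A).mp (h ⟨h1, fun _ => h2⟩)
    ext B; simp only [Set.mem_setOf_eq]; tauto

lemma satW_eq_indep (Y : S.Var) (y : S.Val Y) (F : StructFuns S)
    (T T' : Set (Env S)) (A : Env S) :
    SatW (Form.eq Y y) F T A ↔ SatW (Form.eq Y y) F T' A := Iff.rfl

/-- Validity of the Tr3 clauses. -/
lemma tr3_valid {χ χ' : Form S} (h : Tr3 χ χ') :
    ∀ (F : StructFuns S) (T : Set (Env S)) (A : Env S),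
      RecursiveF F → T.Nonempty → (∀ B ∈ T, Complies F B) → A ∈ T →
      (SatW χ F T A ↔ SatW χ' F T A) := by
  induction h with
  | eq Y y =>
    intro F T A hF _ hC hA
    simp only [SatW]
    rw [intVal_empty hF (hC A hA)]
  | neg _ ih =>
    intro F T A hF hne hC hA
    simp only [SatW]
    rw [ih F T A hF hne hC hA]
  | conj _ _ ih1 ih2 =>
    intro F T A hF hne hC hA
    simp only [SatW]
    rw [ih1 F T A hF hne hC hA, ih2 F T A hF hne hC hA]
  | know _ ih =>
    intro F T A hF hne hC _
    simp only [SatW]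
    exact forall₂_congr fun B hB => ih F T B hF hne hC hB
  | @ann α α' φ φ' _ _ ihα ihφ =>
    intro F T A hF hne hC hA
    simp only [SatW]
    have hαiff : ∀ B ∈ T, SatW α F T B ↔ SatW α' F T B :=
      fun B hB => ihα F T B hF hne hC hB
    have hset : {B | B ∈ T ∧ SatW α F T B} = {B | B ∈ T ∧ SatW α' F T B} := by
      ext B; simp only [Set.mem_setOf_eq]
      exact and_congr_right fun hB => hαiff B hB
    have hAmem : SatW α F T A → A ∈ {B | B ∈ T ∧ SatW α F T B} := fun hα => ⟨hA, hα⟩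
    have hiff : SatW α F T A →
        (SatW φ F {B | B ∈ T ∧ SatW α F T B} A ↔
          SatW φ' F {B | B ∈ T ∧ SatW α F T B} A) := fun hα =>
      ihφ F {B | B ∈ T ∧ SatW α F T B} A hF ⟨A, hAmem hα⟩
        (fun B hB => hC B hB.1) (hAmem hα)
    constructor
    · intro h hα'
      have hα : SatW α F T A := (hαiff A hA).mpr hα'
      rw [← hset]
      exact (hiff hα).mp (h hα)
    · intro h hα
      have hα' : SatW α' F T A := (hαiff A hA).mp hα
      have := h hα'
      rw [← hset] at this
      exact (hiff hα).mpr this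
  | intEq I Y y => intro F T A _ _ _ _; rfl
  | @intNeg I φ χ _ ih =>
    intro F T A hF hne hC hA
    exact Iff.trans Iff.rfl (ih F T A hF hne hC hA)
  | @intConj I φ ψ χ _ ih =>
    intro F T A hF hne hC hA
    exact Iff.trans Iff.rfl (ih F T A hF hne hC hA)
  | @intKnow I φ χ _ ih =>
    intro F T A hF hne hC hA
    refine Iff.trans ?_ (ih F T A hF hne hC hA)
    simp only [SatW]
    constructor
    · intro h B hB
      exact h _ ⟨B, hB, rfl⟩
    · rintro h B' ⟨B, hB, rfl⟩
      exact h B hB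
  | @intAnnEq I α χ Y y _ ih =>
    intro F T A hF hne hC hA
    refine Iff.trans ?_ (ih F T A hF hne hC hA)
    simp only [SatW, Form.impl]
    tauto
  | @intAnnNeg I α φ χ _ ih =>
    intro F T A hF hne hC hA
    refine Iff.trans ?_ (ih F T A hF hne hC hA)
    simp only [SatW, Form.impl]
    tauto
  | @intAnnConj I α φ ψ χ _ ih =>
    intro F T A hF hne hC hA
    refine Iff.trans ?_ (ih F T A hF hne hC hA)
    simp only [SatW]
    tauto
  | @intAnnKnow I α φ χ _ ih =>
    intro F T A hF hne hC hA
    refine Iff.trans ?_ (ih F T A hF hne hC hA)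
    exact satW_annKnow α φ (intF F I) ((fun B => intVal F B I) '' T) (intVal F A I)
  | @intAnnAnn I α β φ χ _ ih =>
    intro F T A hF hne hC hA
    refine Iff.trans ?_ (ih F T A hF hne hC hA)
    exact satW_annAnn α β φ (intF F I) ((fun B => intVal F B I) '' T) (intVal F A I)
  | @intAnnInt I J α φ χ _ ih =>
    intro F T A hF hne hC hA
    refine Iff.trans ?_ (ih F T A hF hne hC hA)
    simp only [SatW]
    have hset : ((fun B' => intVal (intF F I) B' J) ''
          {B | B ∈ (fun B => intVal F B I) '' T ∧
            SatW α (intF F I) ((fun B => intVal F B I) '' T) B}) =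
        ((fun B => intVal F B (icomp I J)) ''
          {B | B ∈ T ∧
            SatW α (intF F I) ((fun B => intVal F B I) '' T) (intVal F B I)}) := by
      ext C
      constructor
      · rintro ⟨B', ⟨⟨B, hB, rfl⟩, hα⟩, rfl⟩
        exact ⟨B, ⟨hB, hα⟩, (intVal_comp hF B I J).symm⟩
      · rintro ⟨B, ⟨hB, hα⟩, rfl⟩
        exact ⟨intVal F B I, ⟨⟨B, hB, rfl⟩, hα⟩, intVal_comp hF B I J⟩
    rw [hset, intF_comp, intVal_comp hF A I J]
  | @intInt I J φ χ _ ih =>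
    intro F T A hF hne hC hA
    refine Iff.trans ?_ (ih F T A hF hne hC hA)
    simp only [SatW]
    have hset : ((fun B' => intVal (intF F I) B' J) ''
          ((fun B => intVal F B I) '' T)) =
        ((fun B => intVal F B (icomp I J)) '' T) := by
      rw [← Set.image_comp]
      exact Set.image_congr' (fun B => intVal_comp hF B I J)
    rw [hset, intF_comp, intVal_comp hF A I J]

end Validity

section Provability

variable {S : Sig}

open Form ThmPAKC

lemma thm_taut_mp1 {a b : Form S}
    (t : Tauto (Form.impl a b)) (ha : ThmPAKC a) : ThmPAKC b :=
  ThmPAKC.mp (ThmPAKC.taut t) ha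

lemma thm_taut_mp2 {a b c : Form S}
    (t : Tauto (Form.impl a (Form.impl b c)))
    (ha : ThmPAKC a) (hb : ThmPAKC b) : ThmPAKC c :=
  ThmPAKC.mp (ThmPAKC.mp (ThmPAKC.taut t) ha) hb

lemma thm_iff_refl (a : Form S) : ThmPAKC (Form.iffF a a) := by
  apply ThmPAKC.taut
  intro v hn hc
  simp only [Form.iffF, Form.impl, hn, hc]
  rcases Bool.eq_false_or_eq_true (v a) with h | h <;> simp [h]

lemma thm_iff_symm {a b : Form S} (h : ThmPAKC (Form.iffF a b)) :
    ThmPAKC (Form.iffF b a) := by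
  refine thm_taut_mp1 ?_ h
  intro v hn hc
  simp only [Form.iffF, Form.impl, hn, hc]
  rcases Bool.eq_false_or_eq_true (v a) with h1 | h1 <;>
    rcases Bool.eq_false_or_eq_true (v b) with h2 | h2 <;> simp [h1, h2]

lemma thm_iff_trans {a b c : Form S} (h1 : ThmPAKC (Form.iffF a b))
    (h2 : ThmPAKC (Form.iffF b c)) : ThmPAKC (Form.iffF a c) := by
  refine thm_taut_mp2 ?_ h1 h2
  intro v hn hc
  simp only [Form.iffF, Form.impl, hn, hc]
  rcases Bool.eq_false_or_eq_true (v a) with h1 | h1 <;>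
    rcases Bool.eq_false_or_eq_true (v b) with h2 | h2 <;>
    rcases Bool.eq_false_or_eq_true (v c) with h3 | h3 <;> simp [h1, h2, h3]

lemma thm_iff_mp {a b : Form S} (h : ThmPAKC (Form.iffF a b)) :
    ThmPAKC (Form.impl a b) := by
  refine thm_taut_mp1 ?_ h
  intro v hn hc
  simp only [Form.iffF, Form.impl, hn, hc]
  rcases Bool.eq_false_or_eq_true (v a) with h1 | h1 <;>
    rcases Bool.eq_false_or_eq_true (v b) with h2 | h2 <;> simp [h1, h2]

lemma thm_iff_mpr {a b : Form S} (h : ThmPAKC (Form.iffF a b)) :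
    ThmPAKC (Form.impl b a) := thm_iff_mp (thm_iff_symm h)

lemma thm_iff_intro {a b : Form S} (h1 : ThmPAKC (Form.impl a b))
    (h2 : ThmPAKC (Form.impl b a)) : ThmPAKC (Form.iffF a b) := by
  refine thm_taut_mp2 ?_ h1 h2
  intro v hn hc
  simp only [Form.iffF, Form.impl, hn, hc]
  rcases Bool.eq_false_or_eq_true (v a) with h1 | h1 <;>
    rcases Bool.eq_false_or_eq_true (v b) with h2 | h2 <;> simp [h1, h2]

lemma thm_neg_cong {a b : Form S} (h : ThmPAKC (Form.iffF a b)) :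
    ThmPAKC (Form.iffF (Form.neg a) (Form.neg b)) := by
  refine thm_taut_mp1 ?_ h
  intro v hn hc
  simp only [Form.iffF, Form.impl, hn, hc]
  rcases Bool.eq_false_or_eq_true (v a) with h1 | h1 <;>
    rcases Bool.eq_false_or_eq_true (v b) with h2 | h2 <;> simp [h1, h2]

lemma thm_conj_cong {a b c d : Form S} (h1 : ThmPAKC (Form.iffF a b))
    (h2 : ThmPAKC (Form.iffF c d)) :
    ThmPAKC (Form.iffF (Form.conj a c) (Form.conj b d)) := by
  refine thm_taut_mp2 ?_ h1 h2
  intro v hn hc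
  simp only [Form.iffF, Form.impl, hn, hc]
  rcases Bool.eq_false_or_eq_true (v a) with h1 | h1 <;>
    rcases Bool.eq_false_or_eq_true (v b) with h2 | h2 <;>
    rcases Bool.eq_false_or_eq_true (v c) with h3 | h3 <;>
    rcases Bool.eq_false_or_eq_true (v d) with h4 | h4 <;> simp [h1, h2, h3, h4]

lemma thm_impl_cong {a b c d : Form S} (h1 : ThmPAKC (Form.iffF a b))
    (h2 : ThmPAKC (Form.iffF c d)) :
    ThmPAKC (Form.iffF (Form.impl a c) (Form.impl b d)) :=
  thm_neg_cong (thm_conj_cong h1 (thm_neg_cong h2))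

lemma thm_know_cong {a b : Form S} (h : ThmPAKC (Form.iffF a b)) :
    ThmPAKC (Form.iffF (Form.know a) (Form.know b)) := by
  have h1 : ThmPAKC (Form.impl (Form.know a) (Form.know b)) :=
    ThmPAKC.mp (ThmPAKC.axK a b) (ThmPAKC.necK (thm_iff_mp h))
  have h2 : ThmPAKC (Form.impl (Form.know b) (Form.know a)) :=
    ThmPAKC.mp (ThmPAKC.axK b a) (ThmPAKC.necK (thm_iff_mpr h))
  exact thm_iff_intro h1 h2

lemma thm_ann_cong {α β a b : Form S} (hαβ : ThmPAKC (Form.iffF α β))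
    (h : ThmPAKC (Form.iffF a b)) :
    ThmPAKC (Form.iffF (Form.ann α a) (Form.ann β b)) := by
  have s1 : ThmPAKC (Form.iffF (Form.ann α a) (Form.ann β a)) :=
    ThmPAKC.reAnn a hαβ
  have h1 : ThmPAKC (Form.impl (Form.ann β a) (Form.ann β b)) :=
    ThmPAKC.mp (ThmPAKC.kAnn β a b) (ThmPAKC.necAnn β (thm_iff_mp h))
  have h2 : ThmPAKC (Form.impl (Form.ann β b) (Form.ann β a)) :=
    ThmPAKC.mp (ThmPAKC.kAnn β b a) (ThmPAKC.necAnn β (thm_iff_mpr h))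
  exact thm_iff_trans s1 (thm_iff_intro h1 h2)

/-- Interventions distribute over implication (derived). -/
lemma thm_int_impl (I : Intervention S) (a b : Form S) :
    ThmPAKC (Form.iffF (Form.int I (Form.impl a b))
      (Form.impl (Form.int I a) (Form.int I b))) := by
  have s1 : ThmPAKC (Form.iffF (Form.int I (Form.impl a b))
      (Form.neg (Form.int I (Form.conj a (Form.neg b))))) :=
    ThmPAKC.aNeg I (Form.conj a (Form.neg b))
  have s2 : ThmPAKC (Form.iffF (Form.int I (Form.conj a (Form.neg b)))
      (Form.conj (Form.int I a) (Form.int I (Form.neg b)))) :=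
    ThmPAKC.aConj I a (Form.neg b)
  have s3 : ThmPAKC (Form.iffF (Form.conj (Form.int I a) (Form.int I (Form.neg b)))
      (Form.conj (Form.int I a) (Form.neg (Form.int I b)))) :=
    thm_conj_cong (thm_iff_refl _) (ThmPAKC.aNeg I b)
  exact thm_iff_trans s1 (thm_neg_cong (thm_iff_trans s2 s3))

lemma thm_int_cong {a b : Form S} (I : Intervention S)
    (h : ThmPAKC (Form.iffF a b)) :
    ThmPAKC (Form.iffF (Form.int I a) (Form.int I b)) := by
  have h1 : ThmPAKC (Form.impl (Form.int I a) (Form.int I b)) :=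
    ThmPAKC.mp (thm_iff_mp (thm_int_impl I a b)) (ThmPAKC.necInt I (thm_iff_mp h))
  have h2 : ThmPAKC (Form.impl (Form.int I b) (Form.int I a)) :=
    ThmPAKC.mp (thm_iff_mp (thm_int_impl I b a)) (ThmPAKC.necInt I (thm_iff_mpr h))
  exact thm_iff_intro h1 h2

/-- The announcement reduction for atoms, without an inner intervention. -/
lemma thm_ann_eq (α : Form S) (Y : S.Var) (y : S.Val Y) :
    ThmPAKC (Form.iffF (Form.ann α (Form.eq Y y))
      (Form.impl α (Form.eq Y y))) := by
  have e := ThmPAKC.aEmpty (S := S) Y y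
  have s1 : ThmPAKC (Form.iffF (Form.ann α (Form.eq Y y))
      (Form.ann α (Form.int (iEmpty S) (Form.eq Y y)))) :=
    thm_ann_cong (thm_iff_refl α) e
  have s2 := ThmPAKC.annEq α (iEmpty S) Y y
  have s3 : ThmPAKC (Form.iffF (Form.impl α (Form.int (iEmpty S) (Form.eq Y y)))
      (Form.impl α (Form.eq Y y))) :=
    thm_impl_cong (thm_iff_refl α) (thm_iff_symm e)
  exact thm_iff_trans s1 (thm_iff_trans s2 s3)

/-- Provability of the Tr3 equivalences. -/
lemma tr3_thm {χ χ' : Form S} (h : Tr3 χ χ') : ThmPAKC (Form.iffF χ χ') := by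
  induction h with
  | eq Y y => exact ThmPAKC.aEmpty Y y
  | neg _ ih => exact thm_neg_cong ih
  | conj _ _ ih1 ih2 => exact thm_conj_cong ih1 ih2
  | know _ ih => exact thm_know_cong ih
  | ann _ _ ih1 ih2 => exact thm_ann_cong ih1 ih2
  | intEq I Y y => exact thm_iff_refl _
  | @intNeg I φ χ _ ih => exact thm_iff_trans (ThmPAKC.aNeg I φ) ih
  | @intConj I φ ψ χ _ ih => exact thm_iff_trans (ThmPAKC.aConj I φ ψ) ih
  | @intKnow I φ χ _ ih => exact thm_iff_trans (ThmPAKC.cm I φ) ih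
  | @intAnnEq I α χ Y y _ ih =>
    exact thm_iff_trans (thm_int_cong I (thm_ann_eq α Y y)) ih
  | @intAnnNeg I α φ χ _ ih =>
    exact thm_iff_trans (thm_int_cong I (ThmPAKC.annNeg α φ)) ih
  | @intAnnConj I α φ ψ χ _ ih =>
    exact thm_iff_trans (thm_int_cong I (ThmPAKC.annConj α φ ψ)) ih
  | @intAnnKnow I α φ χ _ ih =>
    exact thm_iff_trans (thm_int_cong I (ThmPAKC.annKnow α φ)) ih
  | @intAnnAnn I α β φ χ _ ih =>
    exact thm_iff_trans (thm_int_cong I (ThmPAKC.annAnn α β φ)) ih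
  | @intAnnInt I J α φ χ _ ih =>
    have s1 := ThmPAKC.intAnn I α (Form.int J φ)
    have s2 : ThmPAKC (Form.iffF
        (Form.ann (Form.int I α) (Form.int I (Form.int J φ)))
        (Form.ann (Form.int I α) (Form.int (icomp I J) φ))) :=
      thm_ann_cong (thm_iff_refl _) (ThmPAKC.aIntInt I J φ)
    exact thm_iff_trans (thm_iff_trans s1 s2) ih
  | @intInt I J φ χ _ ih => exact thm_iff_trans (ThmPAKC.aIntInt I J φ) ih

end Provability

section WellDefined

variable {S : Sig}

/-- Every Tr3 translation is an L′_PAKC formula. -/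
lemma tr3_pakc' {χ χ' : Form S} (h : Tr3 χ χ') : IsPAKC' χ' := by
  induction h with
  | eq Y y => exact IsPAKC'.intEq _ Y y
  | neg _ ih => exact IsPAKC'.neg ih
  | conj _ _ ih1 ih2 => exact IsPAKC'.conj ih1 ih2
  | know _ ih => exact IsPAKC'.know ih
  | ann _ _ ih1 ih2 => exact IsPAKC'.ann ih1 ih2
  | intEq I Y y => exact IsPAKC'.intEq I Y y
  | intNeg _ ih => exact ih
  | intConj _ ih => exact ih
  | intKnow _ ih => exact ih
  | intAnnEq _ _ _ ih => exact ih
  | intAnnNeg _ ih => exact ih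
  | intAnnConj _ ih => exact ih
  | intAnnKnow _ ih => exact ih
  | intAnnAnn _ ih => exact ih
  | intAnnInt _ ih => exact ih
  | intInt _ ih => exact ih

/-- Tr3 is functional. -/
lemma tr3_func {χ a : Form S} (h1 : Tr3 χ a) : ∀ {b : Form S}, Tr3 χ b → a = b := by
  induction h1 with
  | eq Y y => intro b h2; cases h2; rfl
  | neg _ ih =>
    intro b h2; cases h2 with
    | neg h => exact congrArg Form.neg (ih h)
  | conj _ _ ih1 ih2 =>
    intro b h2; cases h2 with
    | conj ha hb => rw [ih1 ha, ih2 hb]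
  | know _ ih =>
    intro b h2; cases h2 with
    | know h => exact congrArg Form.know (ih h)
  | ann _ _ ih1 ih2 =>
    intro b h2; cases h2 with
    | ann ha hb => rw [ih1 ha, ih2 hb]
  | intEq I Y y => intro b h2; cases h2; rfl
  | intNeg _ ih =>
    intro b h2; cases h2 with
    | intNeg h => exact ih h
  | intConj _ ih =>
    intro b h2; cases h2 with
    | intConj h => exact ih h
  | intKnow _ ih =>
    intro b h2; cases h2 with
    | intKnow h => exact ih h
  | intAnnEq Y y _ ih =>
    intro b h2; cases h2 with
    | intAnnEq _ _ h => exact ih h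
  | intAnnNeg _ ih =>
    intro b h2; cases h2 with
    | intAnnNeg h => exact ih h
  | intAnnConj _ ih =>
    intro b h2; cases h2 with
    | intAnnConj h => exact ih h
  | intAnnKnow _ ih =>
    intro b h2; cases h2 with
    | intAnnKnow h => exact ih h
  | intAnnAnn _ ih =>
    intro b h2; cases h2 with
    | intAnnAnn h => exact ih h
  | intAnnInt _ ih =>
    intro b h2; cases h2 with
    | intAnnInt h => exact ih h
  | intInt _ ih =>
    intro b h2; cases h2 with
    | intInt h => exact ih h

/-- Termination measure for the Tr3 recursion. -/
def meas : Form S → ℕ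
  | .eq _ _ => 1
  | .neg φ => meas φ + 1
  | .conj φ ψ => meas φ + meas ψ + 1
  | .know φ => meas φ + 1
  | .ann α φ => (3 * meas α + 8) * meas φ
  | .int _ φ => 2 * meas φ

lemma meas_pos (φ : Form S) : 1 ≤ meas φ := by
  induction φ with
  | eq Y y => exact le_refl 1
  | neg φ ih => simp only [meas]; omega
  | conj φ ψ ih1 ih2 => simp only [meas]; omega
  | know φ ih => simp only [meas]; omega
  | ann α φ ih1 ih2 => simp only [meas]; nlinarith
  | int I φ ih => simp only [meas]; omega

/-- Tr3 is total. -/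
lemma tr3_total_aux : ∀ (n : ℕ) (χ : Form S), meas χ < n → ∃ χ', Tr3 χ χ' := by
  intro n
  induction n with
  | zero => intro χ h; exact absurd h (by omega)
  | succ n ih =>
    intro χ hχ
    cases χ with
    | eq Y y => exact ⟨_, Tr3.eq Y y⟩
    | neg φ =>
      simp only [meas] at hχ
      obtain ⟨φ', h⟩ := ih φ (by omega)
      exact ⟨_, Tr3.neg h⟩
    | conj φ ψ =>
      simp only [meas] at hχ
      obtain ⟨φ', h1⟩ := ih φ (by omega)
      obtain ⟨ψ', h2⟩ := ih ψ (by omega)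
      exact ⟨_, Tr3.conj h1 h2⟩
    | know φ =>
      simp only [meas] at hχ
      obtain ⟨φ', h⟩ := ih φ (by omega)
      exact ⟨_, Tr3.know h⟩
    | ann α φ =>
      simp only [meas] at hχ
      have hα := meas_pos α
      have hφ := meas_pos φ
      obtain ⟨α', h1⟩ := ih α (by nlinarith)
      obtain ⟨φ', h2⟩ := ih φ (by nlinarith)
      exact ⟨_, Tr3.ann h1 h2⟩
    | int I φ =>
      cases φ with
      | eq Y y => exact ⟨_, Tr3.intEq I Y y⟩
      | neg ψ =>
        simp only [meas] at hχ
        obtain ⟨χ', h⟩ := ih (Form.neg (Form.int I ψ)) (by simp only [meas]; omega)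
        exact ⟨_, Tr3.intNeg h⟩
      | conj ψ₁ ψ₂ =>
        simp only [meas] at hχ
        obtain ⟨χ', h⟩ := ih (Form.conj (Form.int I ψ₁) (Form.int I ψ₂))
          (by simp only [meas]; omega)
        exact ⟨_, Tr3.intConj h⟩
      | know ψ =>
        simp only [meas] at hχ
        obtain ⟨χ', h⟩ := ih (Form.know (Form.int I ψ)) (by simp only [meas]; omega)
        exact ⟨_, Tr3.intKnow h⟩
      | int J ψ =>
        simp only [meas] at hχ
        have hψ := meas_pos ψ
        obtain ⟨χ', h⟩ := ih (Form.int (icomp I J) ψ) (by simp only [meas]; omega)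
        exact ⟨_, Tr3.intInt h⟩
      | ann α ψ =>
        have hα := meas_pos α
        cases ψ with
        | eq Y y =>
          simp only [meas] at hχ
          obtain ⟨χ', h⟩ := ih (Form.int I (Form.impl α (Form.eq Y y)))
            (by simp only [meas, Form.impl]; nlinarith)
          exact ⟨_, Tr3.intAnnEq Y y h⟩
        | neg ψ₀ =>
          simp only [meas] at hχ
          have h0 := meas_pos ψ₀
          obtain ⟨χ', h⟩ := ih
            (Form.int I (Form.impl α (Form.neg (Form.ann α ψ₀))))
            (by simp only [meas, Form.impl]; nlinarith)
          exact ⟨_, Tr3.intAnnNeg h⟩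
        | conj ψ₁ ψ₂ =>
          simp only [meas] at hχ
          have h1 := meas_pos ψ₁
          have h2 := meas_pos ψ₂
          obtain ⟨χ', h⟩ := ih
            (Form.int I (Form.conj (Form.ann α ψ₁) (Form.ann α ψ₂)))
            (by simp only [meas, Form.impl]; nlinarith)
          exact ⟨_, Tr3.intAnnConj h⟩
        | know ψ₀ =>
          simp only [meas] at hχ
          have h0 := meas_pos ψ₀
          obtain ⟨χ', h⟩ := ih
            (Form.int I (Form.impl α (Form.know (Form.impl α (Form.ann α ψ₀)))))
            (by simp only [meas, Form.impl]; nlinarith)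
          exact ⟨_, Tr3.intAnnKnow h⟩
        | ann β ψ₀ =>
          simp only [meas] at hχ
          have hβ := meas_pos β
          have h0 := meas_pos ψ₀
          obtain ⟨χ', h⟩ := ih
            (Form.int I (Form.ann (Form.conj α (Form.ann α β)) ψ₀))
            (by simp only [meas, Form.impl]; nlinarith)
          exact ⟨_, Tr3.intAnnAnn h⟩
        | int J ψ₀ =>
          simp only [meas] at hχ
          have h0 := meas_pos ψ₀
          obtain ⟨χ', h⟩ := ih
            (Form.ann (Form.int I α) (Form.int (icomp I J) ψ₀))
            (by simp only [meas, Form.impl]; nlinarith)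
          exact ⟨_, Tr3.intAnnInt h⟩

lemma tr3_total (χ : Form S) : ∃ χ', Tr3 χ χ' :=
  tr3_total_aux (meas χ + 1) χ (by omega)

end WellDefined

/-- Theorem: the translation tr₃ is well defined (it assigns to each L_PAKC
formula a unique translation) and, for every L_PAKC formula `χ`: (1) `tr₃(χ)` is
an L′_PAKC formula; (2) `χ ↔ tr₃(χ)` is provable in the system L_PAKC;
(3) `χ ↔ tr₃(χ)` is valid over epistemic (recursive) causal models. -/
theorem tr3_well_defined_and_correct (S : Sig) (χ : Form S) :
    (∃! χ' : Form S, Tr3 χ χ') ∧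
      ∀ χ' : Form S, Tr3 χ χ' →
        IsPAKC' χ' ∧
        ThmPAKC (Form.iffF χ χ') ∧
        ∀ (F : StructFuns S) (T : Set (Env S)) (A : Env S),
          RecursiveF F → T.Nonempty → (∀ B ∈ T, Complies F B) → A ∈ T →
          (SatW χ F T A ↔ SatW χ' F T A) := by
  constructor
  · obtain ⟨χ', h⟩ := tr3_total χ
    exact ⟨χ', h, fun y hy => tr3_func hy h⟩
  · intro χ' h
    exact ⟨tr3_pakc' h, tr3_thm h, tr3_valid h⟩
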